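/- Let 0 < η < 1 − s. Let a : [0,1] → [0,∞) be measurable and bounded, and suppose that for all sufficiently small ε > 0 one has ∫_0^ε a(r)(ε − r)^{-s} dr > ε^{η−1} ∫_0^ε a(r) dr. Suppose moreover there exists c > 0 with ∫_0^t a(r) dr ≥ c t^n for all small t > 0. Then we have a contradiction; that is, the two hypotheses are incompatible: there exists a sequence ε_j → 0 along which ε_j ∫_0^{ε_j} a(r)(ε_j − r)^{-s} dr ≤ ε_j^η ∫_0^{ε_j} a(r) dr. -/

import Mathlib

open MeasureTheory Set

lemma EL.intOn_shift (s : ℝ) (hs1 : s < 1) (x b : ℝ) :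
    IntegrableOn (fun ε => (ε - x) ^ (-s)) (Set.Ioo x b) := by
  rcases le_or_gt b x with h | h
  · rw [Set.Ioo_eq_empty (by exact fun hh => absurd (hh.trans_le h) (lt_irrefl x))]
    exact integrableOn_empty
  · have h1 : IntervalIntegrable (fun u : ℝ => u ^ (-s)) volume 0 (b - x) :=
      intervalIntegral.intervalIntegrable_rpow' (by linarith)
    have h2 : IntervalIntegrable (fun ε : ℝ => (ε - x) ^ (-s)) volume x b := by
      have := h1.comp_sub_right x
      simpa using this
    exact ((intervalIntegrable_iff_integrableOn_Ioc_of_le h.le).1 h2).mono_set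
      Set.Ioo_subset_Ioc_self

lemma EL.intval_shift (s : ℝ) (hs0 : 0 < s) (hs1 : s < 1) (x b : ℝ) (hxb : x ≤ b) :
    ∫ ε in Set.Ioo x b, (ε - x) ^ (-s) = (b - x) ^ (1 - s) / (1 - s) := by
  rw [← MeasureTheory.integral_Ioc_eq_integral_Ioo, ← intervalIntegral.integral_of_le hxb]
  rw [intervalIntegral.integral_comp_sub_right (fun u => u ^ (-s)) x, sub_self]
  rw [integral_rpow (Or.inl (by linarith)), Real.zero_rpow (by linarith)]
  rw [show -s + 1 = 1 - s by ring]
  ring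

lemma EL.lint_shift (s : ℝ) (hs0 : 0 < s) (hs1 : s < 1) (x b : ℝ) (hxb : x ≤ b) :
    ∫⁻ ε in Set.Ioo x b, ENNReal.ofReal ((ε - x) ^ (-s)) =
      ENNReal.ofReal ((b - x) ^ (1 - s) / (1 - s)) := by
  rw [← EL.intval_shift s hs0 hs1 x b hxb]
  refine (ofReal_integral_eq_lintegral_ofReal (EL.intOn_shift s hs1 x b) ?_).symm
  refine (ae_restrict_iff' measurableSet_Ioo).2 (Filter.Eventually.of_forall fun ε hε => ?_)
  exact Real.rpow_nonneg (by linarith [hε.1]) _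

/-- The measure-theoretic lemma behind the Euler–Lagrange equation in the viscosity sense:
a nonnegative bounded density `a` cannot simultaneously satisfy the reverse weighted
inequality `∫_0^ε a(r)(ε−r)^{-s} dr > ε^{η−1} ∫_0^ε a(r) dr` for all small `ε` and the
lower density bound `∫_0^t a ≥ c tⁿ`; equivalently, there is a sequence `ε_j → 0` with
`ε_j ∫_0^{ε_j} a(r)(ε_j−r)^{-s} dr ≤ ε_j^η ∫_0^{ε_j} a(r) dr`. -/
theorem euler_lagrange_lemma (n : ℕ) (hn : 1 ≤ n) (s η : ℝ)
    (hs : s ∈ Set.Ioo (0:ℝ) 1) (hη : 0 < η) (hη' : η < 1 - s)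
    (a : ℝ → ℝ) (ham : Measurable a) (hanonneg : ∀ r, 0 ≤ a r)
    (habd : ∃ M : ℝ, ∀ r ∈ Set.Icc (0:ℝ) 1, a r ≤ M)
    (hrev : ∃ ε₀ > (0:ℝ), ∀ ε ∈ Set.Ioo (0:ℝ) ε₀,
      (ε : ℝ) ^ (η - 1) * ∫ r in Set.Ioo (0:ℝ) ε, a r <
        ∫ r in Set.Ioo (0:ℝ) ε, a r * (ε - r) ^ (-s))
    (hdens : ∃ c > (0:ℝ), ∃ t₀ > (0:ℝ), ∀ t ∈ Set.Ioo (0:ℝ) t₀,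
      c * t ^ (n : ℕ) ≤ ∫ r in Set.Ioo (0:ℝ) t, a r) :
    False := by
  obtain ⟨hs0, hs1⟩ := hs
  obtain ⟨M, hM⟩ := habd
  obtain ⟨ε₀, hε₀, hrev⟩ := hrev
  obtain ⟨c, hc, t₀, ht₀, hdens⟩ := hdens
  set g : ℝ → ENNReal := fun r => ENNReal.ofReal (a r) with hg_def
  have hg : Measurable g := ham.ennreal_ofReal
  set Φ : ℝ → ENNReal := fun t => ∫⁻ r in Set.Ioo 0 t, g r with hΦ_def
  -- boundedness of g on [0,1]-subsets
  have hgM : ∀ t : ℝ, t ≤ 1 → ∀ r ∈ Set.Ioo (0:ℝ) t, g r ≤ ENNReal.ofReal M := by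
    intro t ht r hr
    exact ENNReal.ofReal_le_ofReal (hM r ⟨hr.1.le, hr.2.le.trans ht⟩)
  have hΦfin : ∀ t : ℝ, t ≤ 1 → Φ t ≠ ⊤ := by
    intro t ht
    have h1 : Φ t ≤ ENNReal.ofReal M * volume (Set.Ioo (0:ℝ) t) := by
      calc Φ t ≤ ∫⁻ _ in Set.Ioo (0:ℝ) t, ENNReal.ofReal M := by
            refine lintegral_mono_ae ?_
            exact (ae_restrict_iff' measurableSet_Ioo).2
              (Filter.Eventually.of_forall fun r hr => hgM t ht r hr)
        _ = ENNReal.ofReal M * volume (Set.Ioo (0:ℝ) t) := by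
            rw [MeasureTheory.setLIntegral_const]
    exact ne_top_of_le_ne_top
      (ENNReal.mul_ne_top ENNReal.ofReal_ne_top (by rw [Real.volume_Ioo]; exact ENNReal.ofReal_ne_top)) h1
  have hΦmono : ∀ t t' : ℝ, t ≤ t' → Φ t ≤ Φ t' :=
    fun t t' h => lintegral_mono_set (Set.Ioo_subset_Ioo_right h)
  have hF : ∀ t : ℝ, (∫ r in Set.Ioo (0:ℝ) t, a r) = (Φ t).toReal := by
    intro t
    rw [MeasureTheory.integral_eq_lintegral_of_nonneg_ae
      (Filter.Eventually.of_forall fun r => hanonneg r) ham.aestronglyMeasurable]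
  -- Step 1: pointwise lintegral version of the reverse inequality
  have step1 : ∀ l : ℝ, 0 < l → l ≤ min ε₀ 1 → ∀ ε ∈ Set.Ioo (0:ℝ) l,
      ENNReal.ofReal (ε ^ (η - 1)) * Φ ε ≤
        ∫⁻ r in Set.Ioo (0:ℝ) ε, g r * ENNReal.ofReal ((ε - r) ^ (-s)) := by
    intro l hl hl' ε hε
    have hε₁ : ε ∈ Set.Ioo (0:ℝ) ε₀ := ⟨hε.1, hε.2.trans_le (hl'.trans (min_le_left _ _))⟩
    have hεle1 : ε ≤ 1 := (hε.2.trans_le (hl'.trans (min_le_right _ _))).le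
    have hwnn : ∀ᵐ r ∂(volume.restrict (Set.Ioo (0:ℝ) ε)), 0 ≤ a r * (ε - r) ^ (-s) := by
      refine (ae_restrict_iff' measurableSet_Ioo).2 (Filter.Eventually.of_forall fun r hr => ?_)
      exact mul_nonneg (hanonneg r) (Real.rpow_nonneg (by linarith [hr.2]) _)
    have hwm : AEStronglyMeasurable (fun r => a r * (ε - r) ^ (-s))
        (volume.restrict (Set.Ioo (0:ℝ) ε)) :=
      (ham.mul ((measurable_const.sub measurable_id).pow measurable_const)).aestronglyMeasurable
    have e2 : (∫ r in Set.Ioo (0:ℝ) ε, a r * (ε - r) ^ (-s)) =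
        (∫⁻ r in Set.Ioo (0:ℝ) ε, g r * ENNReal.ofReal ((ε - r) ^ (-s))).toReal := by
      rw [MeasureTheory.integral_eq_lintegral_of_nonneg_ae hwnn hwm]
      congr 1
      exact lintegral_congr fun r => ENNReal.ofReal_mul (hanonneg r)
    calc ENNReal.ofReal (ε ^ (η - 1)) * Φ ε
        = ENNReal.ofReal (ε ^ (η - 1) * ∫ r in Set.Ioo (0:ℝ) ε, a r) := by
          rw [ENNReal.ofReal_mul (Real.rpow_nonneg hε.1.le _), hF ε,
            ENNReal.ofReal_toReal (hΦfin ε hεle1)]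
      _ ≤ ENNReal.ofReal (∫ r in Set.Ioo (0:ℝ) ε, a r * (ε - r) ^ (-s)) :=
          ENNReal.ofReal_le_ofReal (hrev ε hε₁).le
      _ ≤ ∫⁻ r in Set.Ioo (0:ℝ) ε, g r * ENNReal.ofReal ((ε - r) ^ (-s)) := by
          rw [e2]; exact ENNReal.ofReal_toReal_le
  -- Step 2: lower bound for the integrated left-hand side
  have step2 : ∀ l : ℝ, 0 < l →
      ENNReal.ofReal (l / 2 * l ^ (η - 1)) * Φ (l / 2) ≤
        ∫⁻ ε in Set.Ioo (0:ℝ) l, ENNReal.ofReal (ε ^ (η - 1)) * Φ ε := by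
    intro l hl
    have hsub : Set.Ioo (l/2) l ⊆ Set.Ioo (0:ℝ) l :=
      Set.Ioo_subset_Ioo_left (by linarith)
    calc ENNReal.ofReal (l / 2 * l ^ (η - 1)) * Φ (l / 2)
        = (ENNReal.ofReal (l ^ (η - 1)) * Φ (l / 2)) * volume (Set.Ioo (l/2) l) := by
          rw [Real.volume_Ioo, ENNReal.ofReal_mul (by linarith)]
          rw [show l - l/2 = l/2 by ring]
          ring
      _ = ∫⁻ _ in Set.Ioo (l/2) l, ENNReal.ofReal (l ^ (η - 1)) * Φ (l / 2) := by
          rw [MeasureTheory.setLIntegral_const]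
      _ ≤ ∫⁻ ε in Set.Ioo (l/2) l, ENNReal.ofReal (ε ^ (η - 1)) * Φ ε := by
          refine lintegral_mono_ae ((ae_restrict_iff' measurableSet_Ioo).2
            (Filter.Eventually.of_forall fun ε hε => ?_))
          refine mul_le_mul' (ENNReal.ofReal_le_ofReal ?_) (hΦmono _ _ hε.1.le)
          exact Real.rpow_le_rpow_of_nonpos (by linarith [hε.1]) hε.2.le (by linarith)
      _ ≤ ∫⁻ ε in Set.Ioo (0:ℝ) l, ENNReal.ofReal (ε ^ (η - 1)) * Φ ε :=
          lintegral_mono_set hsub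
  -- Step 3: Tonelli and upper bound for the integrated right-hand side
  have step3 : ∀ l : ℝ, 0 < l →
      (∫⁻ ε in Set.Ioo (0:ℝ) l, ∫⁻ r in Set.Ioo (0:ℝ) ε, g r * ENNReal.ofReal ((ε - r) ^ (-s)))
        ≤ ENNReal.ofReal (l ^ (1 - s) / (1 - s)) * Φ l := by
    intro l hl
    set S : Set (ℝ × ℝ) := {p | 0 < p.2 ∧ p.2 < p.1 ∧ p.1 < l} with hS_def
    have hSopen : IsOpen S := by
      have : S = {p : ℝ × ℝ | 0 < p.2} ∩ ({p : ℝ × ℝ | p.2 < p.1} ∩ {p : ℝ × ℝ | p.1 < l}) := by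
        ext p; simp [hS_def, and_assoc]
      rw [this]
      exact (isOpen_lt continuous_const continuous_snd).inter
        ((isOpen_lt continuous_snd continuous_fst).inter
          (isOpen_lt continuous_fst continuous_const))
    set F : ℝ × ℝ → ENNReal :=
      S.indicator (fun p => g p.2 * ENNReal.ofReal ((p.1 - p.2) ^ (-s))) with hFdef
    have hFm : Measurable F := by
      refine Measurable.indicator ?_ hSopen.measurableSet
      exact (hg.comp measurable_snd).mul
        (((measurable_fst.sub measurable_snd).pow measurable_const).ennreal_ofReal)
    have eq1 : (∫⁻ ε in Set.Ioo (0:ℝ) l,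
        ∫⁻ r in Set.Ioo (0:ℝ) ε, g r * ENNReal.ofReal ((ε - r) ^ (-s)))
        = ∫⁻ ε, ∫⁻ r, F (ε, r) := by
      rw [← lintegral_indicator measurableSet_Ioo]
      refine lintegral_congr fun ε => ?_
      by_cases hε : ε ∈ Set.Ioo (0:ℝ) l
      · rw [Set.indicator_of_mem hε, ← lintegral_indicator measurableSet_Ioo]
        refine lintegral_congr fun r => ?_
        by_cases hr : r ∈ Set.Ioo (0:ℝ) ε
        · have hmem : (ε, r) ∈ S := ⟨hr.1, hr.2, hε.2⟩
          rw [Set.indicator_of_mem hr]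
          show _ = S.indicator _ (ε, r)
          rw [Set.indicator_of_mem hmem]
        · have hnmem : (ε, r) ∉ S := fun hmem => hr ⟨hmem.1, hmem.2.1⟩
          rw [Set.indicator_of_notMem hr]
          show (0:ENNReal) = S.indicator _ (ε, r)
          rw [Set.indicator_of_notMem hnmem]
      · rw [Set.indicator_of_notMem hε]
        have hz : ∀ r : ℝ, F (ε, r) = 0 := by
          intro r
          have hnmem : (ε, r) ∉ S := fun hmem => hε ⟨lt_trans hmem.1 hmem.2.1, hmem.2.2⟩
          show S.indicator _ (ε, r) = 0
          rw [Set.indicator_of_notMem hnmem]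
        simp [hz]
    have eq2 : (∫⁻ ε, ∫⁻ r, F (ε, r)) = ∫⁻ r, ∫⁻ ε, F (ε, r) :=
      lintegral_lintegral_swap hFm.aemeasurable
    have eq3 : (∫⁻ r, ∫⁻ ε, F (ε, r)) =
        ∫⁻ r in Set.Ioo (0:ℝ) l, g r * ENNReal.ofReal ((l - r) ^ (1 - s) / (1 - s)) := by
      rw [← lintegral_indicator measurableSet_Ioo]
      refine lintegral_congr fun r => ?_
      by_cases hr : r ∈ Set.Ioo (0:ℝ) l
      · have hcong : ∀ ε : ℝ, F (ε, r) =
            (Set.Ioo r l).indicator (fun ε => g r * ENNReal.ofReal ((ε - r) ^ (-s))) ε := by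
          intro ε
          by_cases hε : ε ∈ Set.Ioo r l
          · have hmem : (ε, r) ∈ S := ⟨hr.1, hε.1, hε.2⟩
            rw [Set.indicator_of_mem hε]
            show S.indicator _ (ε, r) = _
            rw [Set.indicator_of_mem hmem]
          · have hnmem : (ε, r) ∉ S := fun hmem => hε ⟨hmem.2.1, hmem.2.2⟩
            rw [Set.indicator_of_notMem hε]
            show S.indicator _ (ε, r) = 0
            rw [Set.indicator_of_notMem hnmem]
        rw [Set.indicator_of_mem hr]
        calc (∫⁻ ε, F (ε, r))
            = ∫⁻ ε in Set.Ioo r l, g r * ENNReal.ofReal ((ε - r) ^ (-s)) := by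
              rw [← lintegral_indicator measurableSet_Ioo]
              exact lintegral_congr hcong
          _ = g r * ∫⁻ ε in Set.Ioo r l, ENNReal.ofReal ((ε - r) ^ (-s)) :=
              lintegral_const_mul _ (((measurable_id.sub measurable_const).pow
                measurable_const).ennreal_ofReal)
          _ = g r * ENNReal.ofReal ((l - r) ^ (1 - s) / (1 - s)) := by
              rw [EL.lint_shift s hs0 hs1 r l hr.2.le]
      · rw [Set.indicator_of_notMem hr]
        have hz : ∀ ε : ℝ, F (ε, r) = 0 := by
          intro ε
          have hnmem : (ε, r) ∉ S := fun hmem => hr ⟨hmem.1, lt_trans hmem.2.1 hmem.2.2⟩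
          show S.indicator _ (ε, r) = 0
          rw [Set.indicator_of_notMem hnmem]
        simp [hz]
    rw [eq1, eq2, eq3]
    calc (∫⁻ r in Set.Ioo (0:ℝ) l, g r * ENNReal.ofReal ((l - r) ^ (1 - s) / (1 - s)))
        ≤ ∫⁻ r in Set.Ioo (0:ℝ) l, ENNReal.ofReal (l ^ (1 - s) / (1 - s)) * g r := by
          refine lintegral_mono_ae ((ae_restrict_iff' measurableSet_Ioo).2
            (Filter.Eventually.of_forall fun r hr => ?_))
          rw [mul_comm]
          refine mul_le_mul' (ENNReal.ofReal_le_ofReal ?_) le_rfl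
          have h1 : (l - r) ^ (1 - s) ≤ l ^ (1 - s) :=
            Real.rpow_le_rpow (by linarith [hr.2]) (by linarith [hr.1]) (by linarith)
          exact div_le_div_of_nonneg_right h1 (by linarith)
      _ = ENNReal.ofReal (l ^ (1 - s) / (1 - s)) * Φ l := lintegral_const_mul _ hg
  -- Combined ENNReal inequality
  have main : ∀ l : ℝ, 0 < l → l ≤ min ε₀ 1 →
      ENNReal.ofReal (l / 2 * l ^ (η - 1)) * Φ (l / 2) ≤
        ENNReal.ofReal (l ^ (1 - s) / (1 - s)) * Φ l := by
    intro l hl hl'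
    refine (step2 l hl).trans (le_trans ?_ (step3 l hl))
    refine lintegral_mono_ae ((ae_restrict_iff' measurableSet_Ioo).2
      (Filter.Eventually.of_forall fun ε hε => step1 l hl hl' ε hε))
  -- Real form of the decay inequality
  have main' : ∀ l : ℝ, 0 < l → l ≤ min ε₀ 1 →
      (Φ (l / 2)).toReal ≤ 2 / (1 - s) * l ^ (1 - s - η) * (Φ l).toReal := by
    intro l hl hl'
    have hle1 : l ≤ 1 := hl'.trans (min_le_right _ _)
    have hfin : Φ l ≠ ⊤ := hΦfin l hle1
    have hfin2 : Φ (l / 2) ≠ ⊤ := ne_top_of_le_ne_top hfin (hΦmono _ _ (by linarith))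
    have h := main l hl hl'
    have hA : (0:ℝ) < l / 2 * l ^ (η - 1) :=
      mul_pos (by linarith) (Real.rpow_pos_of_pos hl _)
    have hB : (0:ℝ) ≤ l ^ (1 - s) / (1 - s) :=
      div_nonneg (Real.rpow_nonneg hl.le _) (by linarith)
    have h2 := (ENNReal.toReal_le_toReal
      (ENNReal.mul_ne_top ENNReal.ofReal_ne_top hfin2)
      (ENNReal.mul_ne_top ENNReal.ofReal_ne_top hfin)).2 h
    rw [ENNReal.toReal_mul, ENNReal.toReal_mul, ENNReal.toReal_ofReal hA.le,
      ENNReal.toReal_ofReal hB] at h2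
    have hFl : 0 ≤ (Φ l).toReal := ENNReal.toReal_nonneg
    have hd : (Φ (l / 2)).toReal ≤ (l ^ (1 - s) / (1 - s) * (Φ l).toReal) /
        (l / 2 * l ^ (η - 1)) := by
      rw [le_div_iff₀ hA]
      linarith [h2]
    refine hd.trans_eq ?_
    have e1 : l ^ (1 - s - η) = l ^ (1 - s) / l ^ η := by
      rw [← Real.rpow_sub hl]
    have e2 : l ^ (η - 1) = l ^ η / l := by
      rw [Real.rpow_sub hl, Real.rpow_one]
    have hη2 : (0:ℝ) < l ^ η := Real.rpow_pos_of_pos hl _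
    have h1s : (0:ℝ) < l ^ (1 - s) := Real.rpow_pos_of_pos hl _
    have e3 : l / 2 * (l ^ η / l) = l ^ η / 2 := by field_simp
    rw [e1, e2, e3]
    field_simp
  -- Choice of the starting scale l₁
  set e : ℝ := 1 - s - η with he_def
  have he : 0 < e := by rw [he_def]; linarith
  set B : ℝ := ((1 - s) / 2 ^ (n + 2)) ^ e⁻¹ with hB_def
  have hBpos : 0 < B := Real.rpow_pos_of_pos (div_pos (by linarith) (by positivity)) _
  set l₁ : ℝ := min (min (ε₀ / 2) (t₀ / 2)) (min 1 B) with hl₁_def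
  have hl₁ : 0 < l₁ := by
    apply lt_min (lt_min (by linarith) (by linarith)) (lt_min one_pos hBpos)
  have hl₁ε : l₁ ≤ min ε₀ 1 := by
    apply le_min
    · exact le_trans (min_le_left _ _) (le_trans (min_le_left _ _) (by linarith))
    · exact le_trans (min_le_right _ _) (min_le_left _ _)
  have hl₁t : l₁ < t₀ := lt_of_le_of_lt
    (le_trans (min_le_left _ _) (min_le_right _ _)) (by linarith)
  have hl₁B : l₁ ≤ B := le_trans (min_le_right _ _) (min_le_right _ _)
  have hcoef : 2 / (1 - s) * l₁ ^ e ≤ 1 / 2 ^ (n + 1) := by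
    have h1 : l₁ ^ e ≤ B ^ e := Real.rpow_le_rpow hl₁.le hl₁B he.le
    have h2 : B ^ e = (1 - s) / 2 ^ (n + 2) := Real.rpow_inv_rpow (le_of_lt (div_pos (by linarith) (by positivity))) he.ne'
    have h3 : 2 / (1 - s) * l₁ ^ e ≤ 2 / (1 - s) * ((1 - s) / 2 ^ (n + 2)) := by
      refine mul_le_mul_of_nonneg_left (h1.trans_eq h2)
        (div_nonneg (by norm_num) (by linarith))
    refine h3.trans_eq ?_
    have h4 : (2:ℝ) ^ (n + 2) = 2 * 2 ^ (n + 1) := by rw [pow_succ]; ring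
    have hne : (1:ℝ) - s ≠ 0 := by linarith
    field_simp [h4]
    ring
  -- Geometric decay
  have geo : ∀ k : ℕ, (Φ (l₁ / 2 ^ k)).toReal ≤ (1 / 2 ^ (n + 1) : ℝ) ^ k * (Φ l₁).toReal := by
    intro k
    induction k with
    | zero => simp
    | succ k ih =>
      set l : ℝ := l₁ / 2 ^ k with hl_def
      have hlpos : 0 < l := by positivity
      have hll₁ : l ≤ l₁ := div_le_self hl₁.le (one_le_pow₀ one_le_two)
      have hstep := main' l hlpos (hll₁.trans hl₁ε)
      have hle : l / 2 = l₁ / 2 ^ (k + 1) := by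
        rw [hl_def, pow_succ]; ring
      have hcoef2 : 2 / (1 - s) * l ^ e ≤ 1 / 2 ^ (n + 1) := by
        refine le_trans ?_ hcoef
        refine mul_le_mul_of_nonneg_left (Real.rpow_le_rpow hlpos.le hll₁ he.le)
          (div_nonneg (by norm_num) (by linarith))
      have hΦl : (Φ l).toReal ≤ (1 / 2 ^ (n + 1) : ℝ) ^ k * (Φ l₁).toReal := ih
      have hnn : (0:ℝ) ≤ (Φ l).toReal := ENNReal.toReal_nonneg
      calc (Φ (l₁ / 2 ^ (k + 1))).toReal = (Φ (l / 2)).toReal := by rw [hle]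
        _ ≤ 2 / (1 - s) * l ^ e * (Φ l).toReal := hstep
        _ ≤ 1 / 2 ^ (n + 1) * (Φ l).toReal :=
            mul_le_mul_of_nonneg_right hcoef2 hnn
        _ ≤ 1 / 2 ^ (n + 1) * ((1 / 2 ^ (n + 1) : ℝ) ^ k * (Φ l₁).toReal) :=
            mul_le_mul_of_nonneg_left hΦl (by positivity)
        _ = (1 / 2 ^ (n + 1) : ℝ) ^ (k + 1) * (Φ l₁).toReal := by ring
  -- Lower bound from density
  have hlow : ∀ k : ℕ, c * (l₁ / 2 ^ k) ^ n ≤ (Φ (l₁ / 2 ^ k)).toReal := by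
    intro k
    have hmem : l₁ / 2 ^ k ∈ Set.Ioo (0:ℝ) t₀ := by
      constructor
      · positivity
      · exact lt_of_le_of_lt (div_le_self hl₁.le (one_le_pow₀ one_le_two)) hl₁t
    have := hdens (l₁ / 2 ^ k) hmem
    rwa [hF] at this
  -- Conclusion
  have hkey : ∀ k : ℕ, c * l₁ ^ n * 2 ^ k ≤ (Φ l₁).toReal := by
    intro k
    have h3 : c * (l₁ ^ n / 2 ^ (k * n)) ≤ 1 / 2 ^ ((n + 1) * k) * (Φ l₁).toReal := by
      have := (hlow k).trans (geo k)
      rwa [div_pow, ← pow_mul, one_div, inv_pow, ← pow_mul, ← one_div] at this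
    have e3 : (n + 1) * k = k * n + k := by ring
    rw [e3, pow_add] at h3
    set A : ℝ := 2 ^ (k * n) with hA_def
    set Bk : ℝ := 2 ^ k with hBk_def
    have hA : (0:ℝ) < A := by positivity
    have hBk : (0:ℝ) < Bk := by positivity
    calc c * l₁ ^ n * Bk = (c * (l₁ ^ n / A)) * (A * Bk) := by field_simp
      _ ≤ (1 / (A * Bk) * (Φ l₁).toReal) * (A * Bk) :=
          mul_le_mul_of_nonneg_right h3 (by positivity)
      _ = (Φ l₁).toReal := by field_simp
  obtain ⟨k, hk⟩ := pow_unbounded_of_one_lt ((Φ l₁).toReal / (c * l₁ ^ n)) (one_lt_two (α := ℝ))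
  have hpos : (0:ℝ) < c * l₁ ^ n := by positivity
  rw [div_lt_iff₀ hpos] at hk
  have := hkey k
  nlinarith [this, hk]
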